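/- arXiv:2603.14230 — 2 statements merged into one kernel-verified Lean document; each statement's English description precedes it below -/
import Mathlib

section
/- Let 𝒢 be a simple graph on a finite vertex set 𝒱 in which every vertex has degree at most d, fix o ∈ 𝒱, r ∈ ℕ, t > 0, and v : 𝒱 → ℝ. Let B_r be the set of vertices at graph distance at most r from o, and let 𝒢^{(r)} be the graph obtained from 𝒢 by deleting every edge with one endpoint in B_r and the other endpoint outside B_r. Set H = −t·A + diag(v) and H^{(r)} = −t·A^{(r)} + diag(v), where A and A^{(r)} are the adjacency matrices of 𝒢 and 𝒢^{(r)}. Then for z = E + iη with η > 0 and μ = log(1 + η/(4td)): | ((H − z·Id)^{−1})_{oo} − ((H^{(r)} − z·Id)^{−1})_{oo} | ≤ (4td/η²)·exp(−2μr). -/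
open Matrix
open scoped Classical Real

noncomputable section

/-- The ball of radius `r` around the vertex `o` in the graph `G`: all vertices
reachable from `o` by a walk of length at most `r`. -/
def graphBall {V : Type*} (G : SimpleGraph V) (o : V) (r : ℕ) : Set V :=
  {v | ∃ p : G.Walk o v, p.length ≤ r}


set_option linter.unusedSectionVars false
set_option linter.unusedVariables false
set_option maxHeartbeats 1000000

namespace CT

variable {V : Type*} [Fintype V] [DecidableEq V]

def l2n (u : V → ℂ) : ℝ := ‖(WithLp.equiv 2 (V → ℂ)).symm u‖

lemma l2n_nonneg (u : V → ℂ) : 0 ≤ l2n u := norm_nonneg _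

lemma l2n_sq (u : V → ℂ) : l2n u ^ 2 = ∑ x, ‖u x‖ ^ 2 := by
  rw [l2n, EuclideanSpace.norm_eq, Real.sq_sqrt] <;> [rfl; positivity]

lemma l2n_star (u : V → ℂ) : l2n (star u) = l2n u := by
  have h1 := l2n_sq (star u); have h2 := l2n_sq u
  have : ∑ x, ‖(star u) x‖^2 = ∑ x, ‖u x‖^2 := by
    refine Finset.sum_congr rfl fun x _ => ?_; simp [Pi.star_apply]
  nlinarith [l2n_nonneg (star u), l2n_nonneg u]

lemma l2n_eq_zero {u : V → ℂ} (h : l2n u = 0) : u = 0 := by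
  have h1 := norm_eq_zero.mp h
  have : (WithLp.equiv 2 (V → ℂ)) ((WithLp.equiv 2 (V → ℂ)).symm u) = 0 := by
    rw [h1]; rfl
  simpa using this

lemma abs_sum_mul_le (u s : V → ℂ) : ‖∑ x, u x * s x‖ ≤ l2n u * l2n s := by
  have h := norm_inner_le_norm (𝕜 := ℂ)
      ((WithLp.equiv 2 (V → ℂ)).symm (star u)) ((WithLp.equiv 2 (V → ℂ)).symm s)
  rw [PiLp.inner_apply] at h
  simp only [WithLp.equiv_symm_apply, WithLp.ofLp_toLp, Pi.star_apply, RCLike.inner_apply] at h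
  calc ‖∑ x, u x * s x‖ = ‖∑ x, s x * (starRingEnd ℂ) (star (u x))‖ := by simp [mul_comm]
    _ ≤ l2n (star u) * l2n s := h
    _ = l2n u * l2n s := by rw [l2n_star]

/-- Schur test. -/
lemma schur (M : Matrix V V ℂ) (a : ℝ) (ha : 0 ≤ a)
    (hrow : ∀ x, ∑ y, ‖M x y‖ ≤ a) (hcol : ∀ y, ∑ x, ‖M x y‖ ≤ a) (v : V → ℂ) :
    l2n (M.mulVec v) ≤ a * l2n v := by
  have h2 : l2n (M.mulVec v) ^ 2 ≤ (a * l2n v) ^ 2 := by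
    rw [l2n_sq, mul_pow, l2n_sq]
    have key : ∀ x, ‖(M.mulVec v) x‖ ^ 2 ≤ a * ∑ y, ‖M x y‖ * ‖v y‖ ^ 2 := by
      intro x
      have h1 : ‖(M.mulVec v) x‖ ≤ ∑ y, ‖M x y‖ * ‖v y‖ := by
        refine (norm_sum_le _ _).trans ?_
        exact Finset.sum_le_sum fun y _ => (norm_mul_le _ _)
      have h2 : (∑ y, ‖M x y‖ * ‖v y‖) ^ 2 ≤
          (∑ y, ‖M x y‖) * ∑ y, ‖M x y‖ * ‖v y‖ ^ 2 := by
        have := Finset.sum_mul_sq_le_sq_mul_sq Finset.univ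
          (fun y => Real.sqrt ‖M x y‖) (fun y => Real.sqrt ‖M x y‖ * ‖v y‖)
        calc (∑ y, ‖M x y‖ * ‖v y‖) ^ 2
            = (∑ y, Real.sqrt ‖M x y‖ * (Real.sqrt ‖M x y‖ * ‖v y‖)) ^ 2 := by
              congr 1; refine Finset.sum_congr rfl fun y _ => ?_
              rw [← mul_assoc, Real.mul_self_sqrt (norm_nonneg _)]
          _ ≤ (∑ y, Real.sqrt ‖M x y‖ ^ 2) * ∑ y, (Real.sqrt ‖M x y‖ * ‖v y‖) ^ 2 := this
          _ = (∑ y, ‖M x y‖) * ∑ y, ‖M x y‖ * ‖v y‖ ^ 2 := by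
              congr 1
              · exact Finset.sum_congr rfl fun y _ => Real.sq_sqrt (norm_nonneg _)
              · refine Finset.sum_congr rfl fun y _ => ?_
                rw [mul_pow, Real.sq_sqrt (norm_nonneg _)]
      calc ‖(M.mulVec v) x‖ ^ 2 ≤ (∑ y, ‖M x y‖ * ‖v y‖) ^ 2 := by
            apply pow_le_pow_left₀ (norm_nonneg _) h1
        _ ≤ (∑ y, ‖M x y‖) * ∑ y, ‖M x y‖ * ‖v y‖ ^ 2 := h2
        _ ≤ a * ∑ y, ‖M x y‖ * ‖v y‖ ^ 2 := by
            apply mul_le_mul_of_nonneg_right (hrow x)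
            positivity
    calc ∑ x, ‖(M.mulVec v) x‖ ^ 2 ≤ ∑ x, a * ∑ y, ‖M x y‖ * ‖v y‖ ^ 2 :=
          Finset.sum_le_sum fun x _ => key x
      _ = a * ∑ y, (∑ x, ‖M x y‖) * ‖v y‖ ^ 2 := by
          rw [← Finset.mul_sum, Finset.sum_comm]
          congr 1; refine Finset.sum_congr rfl fun y _ => ?_
          rw [Finset.sum_mul]
      _ ≤ a * ∑ y, a * ‖v y‖ ^ 2 := by
          apply mul_le_mul_of_nonneg_left _ ha
          refine Finset.sum_le_sum fun y _ => ?_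
          apply mul_le_mul_of_nonneg_right (hcol y); positivity
      _ = a ^ 2 * ∑ y, ‖v y‖ ^ 2 := by rw [← Finset.mul_sum, ← mul_assoc, sq]
  nlinarith [l2n_nonneg (M.mulVec v), l2n_nonneg v, mul_nonneg ha (l2n_nonneg v)]

lemma quad_real (H : Matrix V V ℝ) (hsym : H.IsSymm) (x : V → ℂ) :
    (∑ i, star (x i) * ((H.map (fun a => (a : ℂ))).mulVec x) i).im = 0 := by
  set S := ∑ i, star (x i) * ((H.map (fun a => (a : ℂ))).mulVec x) i with hS
  have : (starRingEnd ℂ) S = S := by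
    rw [hS, map_sum]
    simp only [Matrix.mulVec, dotProduct, Matrix.map_apply, map_sum,
      Finset.mul_sum, _root_.map_mul, Complex.conj_ofReal]
    rw [Finset.sum_comm]
    refine Finset.sum_congr rfl fun i _ => Finset.sum_congr rfl fun j _ => ?_
    have hji : H j i = H i j := by
      conv_lhs => rw [← hsym]
      rfl
    rw [starRingEnd_apply, starRingEnd_apply, star_star, hji]
    ring
  exact Complex.conj_eq_iff_im.mp this

lemma lower_bound (H : Matrix V V ℝ) (hsym : H.IsSymm) (K : Matrix V V ℂ)
    (E η c : ℝ) (hη : 0 < η) (hc : 0 ≤ c)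
    (hK : ∀ v, l2n (K.mulVec v) ≤ c * l2n v) (x : V → ℂ) :
    (η - c) * l2n x ≤
      l2n ((H.map (fun a => (a : ℂ)) + K - (E + η * Complex.I) • 1).mulVec x) := by
  set Hc := H.map (fun a => (a : ℂ)) with hHc
  set z : ℂ := E + η * Complex.I with hz
  set M := Hc + K - z • 1 with hM
  set n := l2n x with hn
  rcases eq_or_lt_of_le (l2n_nonneg x) with h0 | h0
  · have hn0 : n = 0 := h0.symm
    rw [hn0, mul_zero]; exact l2n_nonneg _
  have hsplit : ∀ i, (M.mulVec x) i = (Hc.mulVec x) i + (K.mulVec x) i - z * x i := by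
    intro i
    rw [hM, Matrix.sub_mulVec, Matrix.add_mulVec, Matrix.smul_mulVec,
      Matrix.one_mulVec]
    simp
  set S := ∑ i, star (x i) * (M.mulVec x) i with hS
  set S1 := ∑ i, star (x i) * (Hc.mulVec x) i with hS1
  set S2 := ∑ i, star (x i) * (K.mulVec x) i with hS2
  have hnorm : ∑ i, star (x i) * x i = ((n^2 : ℝ) : ℂ) := by
    rw [hn, l2n_sq]
    push_cast
    refine Finset.sum_congr rfl fun i _ => ?_
    rw [Complex.star_def, ← Complex.normSq_eq_conj_mul_self,
      ← Complex.sq_norm]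
    push_cast
    ring
  have hsum : S = S1 + S2 - z * ((n^2 : ℝ) : ℂ) := by
    rw [hS, hS1, hS2, ← hnorm]
    rw [Finset.mul_sum, ← Finset.sum_add_distrib, ← Finset.sum_sub_distrib]
    refine Finset.sum_congr rfl fun i _ => ?_
    rw [hsplit i]; ring
  have him1 : S1.im = 0 := quad_real H hsym x
  have himz : (z * ((n^2 : ℝ) : ℂ)).im = η * n^2 := by
    rw [hz]; simp [Complex.mul_im, ← Complex.ofReal_pow]
  have himS : S.im = S2.im - η * n^2 := by
    rw [hsum, Complex.sub_im, Complex.add_im, him1, himz]; ring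
  have hS2le : ‖S2‖ ≤ c * n^2 := by
    calc ‖S2‖ ≤ l2n (star x) * l2n (K.mulVec x) := abs_sum_mul_le _ _
      _ = n * l2n (K.mulVec x) := by rw [l2n_star]
      _ ≤ n * (c * n) := by
          apply mul_le_mul_of_nonneg_left (hK x) (le_of_lt h0)
      _ = c * n^2 := by ring
  have hSle : ‖S‖ ≤ n * l2n (M.mulVec x) := by
    calc ‖S‖ ≤ l2n (star x) * l2n (M.mulVec x) := abs_sum_mul_le _ _
      _ = n * l2n (M.mulVec x) := by rw [l2n_star]
  have him2 : |S2.im| ≤ c * n^2 := (Complex.abs_im_le_norm S2).trans hS2le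
  have himS' : |S.im| ≤ n * l2n (M.mulVec x) := (Complex.abs_im_le_norm S).trans hSle
  have key : (η - c) * n^2 ≤ n * l2n (M.mulVec x) := by
    have : η * n^2 = S2.im - S.im := by rw [himS]; ring
    nlinarith [abs_le.mp him2, abs_le.mp himS']
  have key' : n * ((η - c) * n) ≤ n * l2n (M.mulVec x) := by nlinarith
  exact le_of_mul_le_mul_left key' h0

lemma isUnit_of_lb (M : Matrix V V ℂ) (c : ℝ) (hc : 0 < c)
    (hlb : ∀ x, c * l2n x ≤ l2n (M.mulVec x)) : IsUnit M.det := by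
  rw [isUnit_iff_ne_zero]
  intro hdet
  obtain ⟨v, hv0, hMv⟩ := (Matrix.exists_mulVec_eq_zero_iff).mpr hdet
  have h1 := hlb v
  rw [hMv] at h1
  have h2 : l2n (0 : V → ℂ) = 0 := norm_eq_zero.mpr (by rfl)
  rw [h2] at h1
  have hv : l2n v = 0 := le_antisymm (by nlinarith [l2n_nonneg v]) (l2n_nonneg v)
  exact hv0 (l2n_eq_zero hv)

lemma inv_bound (M : Matrix V V ℂ) (c : ℝ) (hc : 0 < c)
    (hlb : ∀ x, c * l2n x ≤ l2n (M.mulVec x)) (v : V → ℂ) :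
    l2n (M⁻¹.mulVec v) ≤ c⁻¹ * l2n v := by
  have hu := isUnit_of_lb M c hc hlb
  have hMv : M.mulVec (M⁻¹.mulVec v) = v := by
    rw [Matrix.mulVec_mulVec, Matrix.mul_nonsing_inv M hu, Matrix.one_mulVec]
  have h1 := hlb (M⁻¹.mulVec v)
  rw [hMv] at h1
  calc l2n (M⁻¹.mulVec v) ≤ l2n v / c := by rwa [le_div_iff₀' hc]
    _ = c⁻¹ * l2n v := by ring

variable {G : SimpleGraph V} {o : V}

lemma dist_le_adj {x y : V} (h : G.Reachable o x) (a : G.Adj x y) :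
    G.dist o y ≤ G.dist o x + 1 := by
  obtain ⟨p, hp⟩ := h.exists_walk_length_eq_dist
  have := SimpleGraph.dist_le (p.concat a)
  rwa [SimpleGraph.Walk.length_concat, hp] at this

lemma dist_lipschitz {x y : V} (a : G.Adj x y) :
    |((G.dist o x : ℝ)) - (G.dist o y : ℝ)| ≤ 1 := by
  by_cases hr : G.Reachable o x
  · have hry : G.Reachable o y := hr.trans a.reachable
    have h1 := dist_le_adj hr a
    have h2 := dist_le_adj hry a.symm
    have h1' : (G.dist o y : ℝ) ≤ (G.dist o x : ℝ) + 1 := by exact_mod_cast h1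
    have h2' : (G.dist o x : ℝ) ≤ (G.dist o y : ℝ) + 1 := by exact_mod_cast h2
    rw [abs_le]
    constructor <;> linarith
  · have hry : ¬ G.Reachable o y := fun h => hr (h.trans a.symm.reachable)
    rw [SimpleGraph.dist_eq_zero_of_not_reachable hr,
      SimpleGraph.dist_eq_zero_of_not_reachable hry]
    simp

lemma crossing_dist {r : ℕ} {x y : V} (a : G.Adj x y)
    (hx : x ∈ graphBall G o r) (hy : y ∉ graphBall G o r) :
    r ≤ G.dist o x ∧ r + 1 ≤ G.dist o y := by
  obtain ⟨p, hp⟩ := hx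
  have hrx : G.Reachable o x := ⟨p⟩
  have hry : G.Reachable o y := hrx.trans a.reachable
  have hdy : r + 1 ≤ G.dist o y := by
    by_contra hlt
    push_neg at hlt
    obtain ⟨q, hq⟩ := hry.exists_walk_length_eq_dist
    exact hy ⟨q, by omega⟩
  have hdx : r ≤ G.dist o x := by
    have := dist_le_adj hrx a
    omega
  exact ⟨hdx, hdy⟩

lemma adj_row_sum (x : V) : ∑ y, G.adjMatrix ℝ x y = G.degree x := by
  simp only [SimpleGraph.adjMatrix_apply]
  rw [SimpleGraph.degree, SimpleGraph.neighborFinset_eq_filter]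
  rw [Finset.sum_boole]

lemma exp_diff_bound {s μ : ℝ} (hμ : 0 ≤ μ) (hs : |s| ≤ μ) :
    |Real.exp s - 1| ≤ Real.exp μ - 1 := by
  obtain ⟨h1, h2⟩ := abs_le.mp hs
  rw [abs_le]
  constructor
  · have hsm : Real.exp (-μ) ≤ Real.exp s := Real.exp_le_exp.mpr (by linarith)
    have h3 : Real.exp μ * Real.exp (-μ) = 1 := by rw [← Real.exp_add]; simp
    nlinarith [Real.exp_pos μ, Real.exp_pos (-μ), sq_nonneg (Real.exp μ - 1)]
  · linarith [Real.exp_le_exp.mpr h2]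

/-- Entry bound for the conjugated perturbation `W H W⁻¹ - H`. -/
lemma conj_entry_bound (μ t : ℝ) (hμ : 0 ≤ μ) (ht : 0 ≤ t)
    (A' : Matrix V V ℝ) (hadj : ∀ i j, A' i j ≠ 0 → G.Adj i j)
    (habs : ∀ i j, |A' i j| ≤ G.adjMatrix ℝ i j) (vpot : V → ℝ) (x y : V) :
    ‖((Matrix.diagonal (fun v => ((Real.exp (μ * G.dist o v) : ℝ) : ℂ)) *
        (((-t) • A' + Matrix.diagonal vpot).map (fun a => (a : ℂ))) *
        Matrix.diagonal (fun v => (((Real.exp (μ * G.dist o v))⁻¹ : ℝ) : ℂ)) -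
        ((-t) • A' + Matrix.diagonal vpot).map (fun a => (a : ℂ))) x y)‖ ≤
      t * (Real.exp μ - 1) * G.adjMatrix ℝ x y := by
  set w : V → ℝ := fun v => Real.exp (μ * G.dist o v) with hw
  set Hc := ((-t) • A' + Matrix.diagonal vpot).map (fun a => (a : ℂ)) with hHc
  have hentry : (Matrix.diagonal (fun v => ((w v : ℝ) : ℂ)) * Hc *
      Matrix.diagonal (fun v => (((w v)⁻¹ : ℝ) : ℂ)) - Hc) x y =
      Hc x y * (((w x * (w y)⁻¹ : ℝ) : ℂ) - 1) := by
    rw [Matrix.sub_apply, Matrix.mul_diagonal, Matrix.diagonal_mul]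
    push_cast
    ring
  rw [hentry]
  by_cases hxy : x = y
  · subst hxy
    have hw0 : w x ≠ 0 := Real.exp_ne_zero _
    have : (w x * (w x)⁻¹ : ℝ) = 1 := mul_inv_cancel₀ hw0
    rw [this]
    simp only [Complex.ofReal_one, sub_self, mul_zero, norm_zero]
    have : G.adjMatrix ℝ x x = 0 := by simp
    rw [this, mul_zero]
  · have hHxy : Hc x y = ((-t * A' x y : ℝ) : ℂ) := by
      rw [hHc, Matrix.map_apply, Matrix.add_apply, Matrix.smul_apply,
        Matrix.diagonal_apply_ne _ hxy]
      rw [smul_eq_mul]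
      push_cast
      ring
    rw [hHxy]
    by_cases hA : A' x y = 0
    · rw [hA]
      simp only [mul_zero, neg_zero, Complex.ofReal_zero, zero_mul, norm_zero]
      have h1 : (0:ℝ) ≤ G.adjMatrix ℝ x y := by
        by_cases h : G.Adj x y <;> simp [SimpleGraph.adjMatrix_apply, h]
      have h2 : (0:ℝ) ≤ Real.exp μ - 1 := by
        have : (1:ℝ) ≤ Real.exp μ := by
          rw [← Real.exp_zero]; exact Real.exp_le_exp.mpr hμ
        linarith
      exact mul_nonneg (mul_nonneg ht h2) h1
    · have hadjxy : G.Adj x y := hadj x y hA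
      have hA1 : G.adjMatrix ℝ x y = 1 := by simp [SimpleGraph.adjMatrix_apply, hadjxy]
      have hAle : |A' x y| ≤ 1 := by rw [← hA1]; exact habs x y
      have hratio : (w x * (w y)⁻¹ : ℝ) = Real.exp (μ * G.dist o x - μ * G.dist o y) := by
        rw [hw, Real.exp_sub, div_eq_mul_inv]
      have hlip : |μ * G.dist o x - μ * G.dist o y| ≤ μ := by
        have h := dist_lipschitz (G := G) (o := o) hadjxy
        calc |μ * G.dist o x - μ * G.dist o y|
            = |μ| * |(G.dist o x : ℝ) - (G.dist o y : ℝ)| := by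
              rw [← abs_mul]; ring_nf
          _ ≤ |μ| * 1 := by
              apply mul_le_mul_of_nonneg_left h (abs_nonneg μ)
          _ = μ := by rw [mul_one, abs_of_nonneg hμ]
      have hexp : |Real.exp (μ * G.dist o x - μ * G.dist o y) - 1| ≤ Real.exp μ - 1 :=
        exp_diff_bound hμ hlip
      have hnorm : ‖((-t * A' x y : ℝ) : ℂ) * (((w x * (w y)⁻¹ : ℝ) : ℂ) - 1)‖
          = |(-t * A' x y : ℝ)| * |(w x * (w y)⁻¹ - 1 : ℝ)| := by
        rw [norm_mul]
        congr 1
        · exact Complex.norm_real _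
        · rw [show (((w x * (w y)⁻¹ : ℝ) : ℂ) - 1) = (((w x * (w y)⁻¹ - 1 : ℝ)) : ℂ) by
            push_cast; ring]
          exact Complex.norm_real _
      rw [hnorm, hA1, mul_one, hratio]
      have h1 : |(-t * A' x y : ℝ)| ≤ t := by
        rw [abs_mul, abs_neg, abs_of_nonneg ht]
        nlinarith [abs_nonneg (A' x y), ht]
      have h2 : (0:ℝ) ≤ Real.exp μ - 1 := by
        have : (1:ℝ) ≤ Real.exp μ := by
          rw [← Real.exp_zero]; exact Real.exp_le_exp.mpr hμ
        linarith
      calc |(-t * A' x y : ℝ)| * |Real.exp (μ * G.dist o x - μ * G.dist o y) - 1|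
          ≤ t * (Real.exp μ - 1) := by
            apply mul_le_mul h1 hexp (abs_nonneg _) ht
        _ = t * (Real.exp μ - 1) := rfl

end CT

open CT

theorem stmt13 (V : Type*) [Fintype V] [DecidableEq V] (d : ℕ) (hd : 0 < d)
    (G : SimpleGraph V) (hdeg : ∀ v : V, G.degree v ≤ d)
    (o : V) (r : ℕ) (t : ℝ) (ht : 0 < t) (vpot : V → ℝ) (E η : ℝ) (hη : 0 < η) :
    norm
        (((((-t) • G.adjMatrix ℝ + Matrix.diagonal vpot).map (fun x => (x : ℂ)) -
            (E + η * Complex.I) • 1)⁻¹ o o) -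
          ((((-t) • (Matrix.of fun i j =>
                if (i ∈ graphBall G o r ↔ j ∈ graphBall G o r) then
                  G.adjMatrix ℝ i j else 0) +
              Matrix.diagonal vpot).map (fun x => (x : ℂ)) -
            (E + η * Complex.I) • 1)⁻¹ o o)) ≤
      4 * t * d / η ^ 2 *
        Real.exp (-2 * Real.log (1 + η / (4 * t * d)) * r) := by
  classical
  have hd' : (0:ℝ) < (d:ℝ) := by exact_mod_cast hd
  have htd : (0:ℝ) < t * d := by positivity
  set μ := Real.log (1 + η / (4 * t * (d:ℝ))) with hμdef
  have harg : (1:ℝ) < 1 + η / (4*t*(d:ℝ)) := by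
    have : (0:ℝ) < η / (4*t*(d:ℝ)) := by positivity
    linarith
  have hμ0 : 0 ≤ μ := Real.log_nonneg (by linarith)
  have hexpμ : Real.exp μ = 1 + η / (4*t*(d:ℝ)) := Real.exp_log (by linarith)
  set A1 := G.adjMatrix ℝ with hA1
  set A2 : Matrix V V ℝ := Matrix.of fun i j =>
      if (i ∈ graphBall G o r ↔ j ∈ graphBall G o r) then A1 i j else 0 with hA2
  set H1 : Matrix V V ℝ := (-t) • A1 + Matrix.diagonal vpot with hH1
  set H2 : Matrix V V ℝ := (-t) • A2 + Matrix.diagonal vpot with hH2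
  set z : ℂ := (E:ℂ) + (η:ℂ) * Complex.I with hz
  set Hc1 := H1.map (fun x => (x : ℂ)) with hHc1
  set Hc2 := H2.map (fun x => (x : ℂ)) with hHc2
  set M1 := Hc1 - z • 1 with hM1
  set M2 := Hc2 - z • 1 with hM2
  show ‖M1⁻¹ o o - M2⁻¹ o o‖ ≤
      4 * t * d / η ^ 2 * Real.exp (-2 * μ * r)
  -- weights
  set w : V → ℝ := fun x => Real.exp (μ * G.dist o x) with hwdef
  have hw0 : ∀ x, w x ≠ 0 := fun x => Real.exp_ne_zero _
  have hwpos : ∀ x, 0 < w x := fun x => Real.exp_pos _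
  have hwo : w o = 1 := by
    rw [hwdef]; simp [SimpleGraph.dist_self]
  set W : Matrix V V ℂ := Matrix.diagonal (fun x => ((w x : ℝ) : ℂ)) with hW
  set Wi : Matrix V V ℂ := Matrix.diagonal (fun x => (((w x)⁻¹ : ℝ) : ℂ)) with hWi
  have hWWi : W * Wi = 1 := by
    rw [hW, hWi, Matrix.diagonal_mul_diagonal]
    have hfun : (fun x => ((w x : ℝ):ℂ) * (((w x)⁻¹ : ℝ):ℂ)) = fun _ => (1:ℂ) := by
      funext x
      rw [← Complex.ofReal_mul, mul_inv_cancel₀ (hw0 x), Complex.ofReal_one]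
    rw [hfun, Matrix.diagonal_one]
  have hWiW : Wi * W = 1 := by
    rw [hW, hWi, Matrix.diagonal_mul_diagonal]
    have hfun : (fun x => (((w x)⁻¹ : ℝ):ℂ) * ((w x : ℝ):ℂ)) = fun _ => (1:ℂ) := by
      funext x
      rw [← Complex.ofReal_mul, inv_mul_cancel₀ (hw0 x), Complex.ofReal_one]
    rw [hfun, Matrix.diagonal_one]
  -- symmetry
  have hA1symm : A1.IsSymm := SimpleGraph.isSymm_adjMatrix G
  have hA1entry : ∀ x y, A1 x y = A1 y x := by
    intro x y
    conv_lhs => rw [← hA1symm]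
    rfl
  have hA2symm : A2.IsSymm := by
    rw [Matrix.IsSymm]
    ext i j
    rw [Matrix.transpose_apply, hA2]
    simp only [Matrix.of_apply]
    by_cases hc : (i ∈ graphBall G o r ↔ j ∈ graphBall G o r)
    · rw [if_pos (iff_comm.mpr hc), if_pos hc, hA1entry]
    · rw [if_neg (fun h => hc (iff_comm.mpr h)), if_neg hc]
  have hH1symm : H1.IsSymm := by
    rw [Matrix.IsSymm, hH1, Matrix.transpose_add, Matrix.transpose_smul,
      Matrix.diagonal_transpose, hA1symm]
  have hH2symm : H2.IsSymm := by
    rw [Matrix.IsSymm, hH2, Matrix.transpose_add, Matrix.transpose_smul,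
      Matrix.diagonal_transpose, hA2symm]
  -- basic lower bounds for M1 M2
  have hc4 : (0:ℝ) ≤ η / 4 := by linarith
  have hc34 : (0:ℝ) < η - η/4 := by linarith
  have hzero : ∀ v : V → ℂ, l2n ((0 : Matrix V V ℂ).mulVec v) ≤ η/4 * l2n v := by
    intro v
    rw [Matrix.zero_mulVec]
    have h0 : l2n (0 : V → ℂ) = 0 := norm_eq_zero.mpr rfl
    rw [h0]
    have := l2n_nonneg v
    positivity
  have hM1lb : ∀ x, (η - η/4) * l2n x ≤ l2n (M1.mulVec x) := by
    intro x
    have h := lower_bound H1 hH1symm 0 E η (η/4) hη hc4 hzero x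
    rwa [add_zero, ← hHc1, ← hz, ← hM1] at h
  have hM2lb : ∀ x, (η - η/4) * l2n x ≤ l2n (M2.mulVec x) := by
    intro x
    have h := lower_bound H2 hH2symm 0 E η (η/4) hη hc4 hzero x
    rwa [add_zero, ← hHc2, ← hz, ← hM2] at h
  have hu1 : IsUnit M1.det := isUnit_of_lb M1 (η - η/4) hc34 hM1lb
  have hu2 : IsUnit M2.det := isUnit_of_lb M2 (η - η/4) hc34 hM2lb
  -- adjacency facts
  have hadj1 : ∀ i j, A1 i j ≠ 0 → G.Adj i j := by
    intro i j h
    by_contra hn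
    exact h (by simp [hA1, SimpleGraph.adjMatrix_apply, hn])
  have habs1 : ∀ i j, |A1 i j| ≤ A1 i j := by
    intro i j
    by_cases h : G.Adj i j <;> simp [hA1, SimpleGraph.adjMatrix_apply, h]
  have hadj2 : ∀ i j, A2 i j ≠ 0 → G.Adj i j := by
    intro i j h
    apply hadj1 i j
    intro h0
    apply h
    rw [hA2]
    simp only [Matrix.of_apply]
    by_cases hc : (i ∈ graphBall G o r ↔ j ∈ graphBall G o r) <;> simp [hc, h0]
  have habs2 : ∀ i j, |A2 i j| ≤ A1 i j := by
    intro i j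
    rw [hA2]
    simp only [Matrix.of_apply]
    by_cases hc : (i ∈ graphBall G o r ↔ j ∈ graphBall G o r)
    · rw [if_pos hc]; exact habs1 i j
    · rw [if_neg hc, abs_zero]
      by_cases h : G.Adj i j <;> simp [hA1, SimpleGraph.adjMatrix_apply, h]
  have hA1nonneg : ∀ i j, (0:ℝ) ≤ A1 i j := by
    intro i j
    by_cases h : G.Adj i j <;> simp [hA1, SimpleGraph.adjMatrix_apply, h]
  have hdegsum : ∀ x, ∑ y, A1 x y ≤ (d:ℝ) := by
    intro x
    rw [hA1, adj_row_sum]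
    exact_mod_cast hdeg x
  have hdegsum' : ∀ y, ∑ x, A1 x y ≤ (d:ℝ) := by
    intro y
    have : ∑ x, A1 x y = ∑ x, A1 y x := Finset.sum_congr rfl fun x _ => hA1entry x y
    rw [this]
    exact hdegsum y
  have hexm1 : (0:ℝ) ≤ Real.exp μ - 1 := by
    have : (1:ℝ) ≤ Real.exp μ := by rw [← Real.exp_zero]; exact Real.exp_le_exp.mpr hμ0
    linarith
  have hηq : t * (Real.exp μ - 1) * (d:ℝ) = η/4 := by
    rw [hexpμ]
    field_simp
    ring
  -- the perturbations K1 K2 and their Schur bounds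
  have hKop : ∀ (A' : Matrix V V ℝ), (∀ i j, A' i j ≠ 0 → G.Adj i j) →
      (∀ i j, |A' i j| ≤ A1 i j) →
      ∀ v, l2n ((W * (((-t) • A' + Matrix.diagonal vpot).map (fun x => (x : ℂ))) * Wi -
        (((-t) • A' + Matrix.diagonal vpot).map (fun x => (x : ℂ)))).mulVec v) ≤
        (η/4) * l2n v := by
    intro A' hadj' habs' v
    apply schur _ (η/4) hc4
    · intro x
      calc ∑ y, ‖(W * (((-t) • A' + Matrix.diagonal vpot).map (fun x => (x : ℂ))) * Wi -
              (((-t) • A' + Matrix.diagonal vpot).map (fun x => (x : ℂ)))) x y‖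
          ≤ ∑ y, t * (Real.exp μ - 1) * A1 x y := by
            refine Finset.sum_le_sum fun y _ => ?_
            exact conj_entry_bound μ t hμ0 ht.le A' hadj'
              (fun i j => (habs' i j).trans (le_of_eq (by rw [hA1]))) vpot x y
        _ = t * (Real.exp μ - 1) * ∑ y, A1 x y := by rw [Finset.mul_sum]
        _ ≤ t * (Real.exp μ - 1) * (d:ℝ) := by
            apply mul_le_mul_of_nonneg_left (hdegsum x)
            positivity
        _ = η/4 := hηq
    · intro y
      calc ∑ x, ‖(W * (((-t) • A' + Matrix.diagonal vpot).map (fun x => (x : ℂ))) * Wi -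
              (((-t) • A' + Matrix.diagonal vpot).map (fun x => (x : ℂ)))) x y‖
          ≤ ∑ x, t * (Real.exp μ - 1) * A1 x y := by
            refine Finset.sum_le_sum fun x _ => ?_
            exact conj_entry_bound μ t hμ0 ht.le A' hadj'
              (fun i j => (habs' i j).trans (le_of_eq (by rw [hA1]))) vpot x y
        _ = t * (Real.exp μ - 1) * ∑ x, A1 x y := by rw [Finset.mul_sum]
        _ ≤ t * (Real.exp μ - 1) * (d:ℝ) := by
            apply mul_le_mul_of_nonneg_left (hdegsum' y)
            positivity
        _ = η/4 := hηq
  -- lower bounds for the conjugated matrices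
  have hconj : ∀ (Hc : Matrix V V ℂ), W * (Hc - z • 1) * Wi = W * Hc * Wi - z • 1 := by
    intro Hc
    rw [Matrix.mul_sub, Matrix.mul_smul, mul_one, Matrix.sub_mul, Matrix.smul_mul, hWWi]
  have hNlb : ∀ (Hm : Matrix V V ℝ), Hm.IsSymm →
      (∀ v, l2n ((W * (Hm.map (fun x => (x : ℂ))) * Wi -
        (Hm.map (fun x => (x : ℂ)))).mulVec v) ≤ (η/4) * l2n v) →
      ∀ x, (η - η/4) * l2n x ≤
        l2n ((W * (Hm.map (fun x => (x : ℂ)) - z • 1) * Wi).mulVec x) := by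
    intro Hm hsym hop x
    have h := lower_bound Hm hsym
      (W * (Hm.map (fun x => (x : ℂ))) * Wi - (Hm.map (fun x => (x : ℂ))))
      E η (η/4) hη hc4 hop x
    have heq : Hm.map (fun x => (x : ℂ)) +
        (W * (Hm.map (fun x => (x : ℂ))) * Wi - (Hm.map (fun x => (x : ℂ)))) -
        ((E:ℂ) + (η:ℂ) * Complex.I) • 1 =
        W * (Hm.map (fun x => (x : ℂ)) - z • 1) * Wi := by
      rw [hconj, ← hz]
      abel
    rwa [heq] at h
  have hN1lb := hNlb H1 hH1symm (by
    intro v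
    have := hKop A1 hadj1 habs1 v
    rwa [← hH1, ← hHc1] at this)
  have hN2lb := hNlb H2 hH2symm (by
    intro v
    have := hKop A2 hadj2 habs2 v
    rwa [← hH2, ← hHc2] at this)
  rw [← hHc1, ← hM1] at hN1lb
  rw [← hHc2, ← hM2] at hN2lb
  have huN1 : IsUnit (W * M1 * Wi).det := isUnit_of_lb _ (η - η/4) hc34 hN1lb
  have huN2 : IsUnit (W * M2 * Wi).det := isUnit_of_lb _ (η - η/4) hc34 hN2lb
  -- conjugated inverses
  have hinv : ∀ (M : Matrix V V ℂ), IsUnit M.det → (W * M * Wi)⁻¹ = W * M⁻¹ * Wi := by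
    intro M hu
    apply Matrix.inv_eq_right_inv
    simp only [Matrix.mul_assoc]
    rw [← Matrix.mul_assoc Wi W (M⁻¹ * Wi), hWiW, one_mul,
      ← Matrix.mul_assoc M M⁻¹ Wi, Matrix.mul_nonsing_inv _ hu, one_mul, hWWi]
  have hinv1 : (W * M1 * Wi)⁻¹ = W * M1⁻¹ * Wi := hinv M1 hu1
  have hinv2 : (W * M2 * Wi)⁻¹ = W * M2⁻¹ * Wi := hinv M2 hu2
  -- the vector e_o
  set eo : V → ℂ := Pi.single o 1 with heo
  have hl2eo : l2n eo = 1 := by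
    have h := l2n_sq eo
    have hsum : ∑ x, ‖eo x‖^2 = 1 := by
      rw [heo]
      have hterm : ∀ x, ‖(Pi.single o 1 : V → ℂ) x‖^2 = if x = o then (1:ℝ) else 0 := by
        intro x
        by_cases hx : x = o
        · subst hx; rw [Pi.single_eq_same]; simp
        · rw [Pi.single_eq_of_ne hx]; simp [hx]
      rw [Finset.sum_congr rfl (fun x _ => hterm x),
        Finset.sum_ite_eq' Finset.univ o (fun _ => (1:ℝ))]
      simp
    nlinarith [l2n_nonneg eo]
  have hWieo : Wi.mulVec eo = eo := by
    rw [hWi, heo, Matrix.diagonal_mulVec_single, hwo]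
    norm_num
  -- transposes
  have hM1tr : M1ᵀ = M1 := by
    rw [hM1, Matrix.transpose_sub, Matrix.transpose_smul, Matrix.transpose_one, hHc1,
      ← Matrix.transpose_map, hH1symm]
  have hG1tr : (M1⁻¹)ᵀ = M1⁻¹ := by rw [Matrix.transpose_nonsing_inv, hM1tr]
  -- the left vector
  have huvec : (fun x => (M1⁻¹ * W) o x) = (W * M1⁻¹ * Wi).mulVec eo := by
    funext x
    rw [← Matrix.mulVec_mulVec, hWieo, heo]
    simp only [Matrix.mulVec_single, MulOpposite.op_one, one_smul, Matrix.col_apply, mul_one]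
    have h2 : (M1⁻¹ * W)ᵀ = W * M1⁻¹ := by
      rw [Matrix.transpose_mul, hG1tr, hW, Matrix.diagonal_transpose]
    calc (M1⁻¹ * W) o x = ((M1⁻¹ * W)ᵀ) x o := by rw [Matrix.transpose_apply]
      _ = (W * M1⁻¹) x o := by rw [h2]
  have hub : l2n (fun x => (M1⁻¹ * W) o x) ≤ (η - η/4)⁻¹ := by
    rw [huvec, ← hinv1]
    have h := inv_bound (W * M1 * Wi) (η - η/4) hc34 hN1lb eo
    rwa [hl2eo, mul_one] at h
  have hv2b : l2n ((W * M2⁻¹).mulVec eo) ≤ (η - η/4)⁻¹ := by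
    have h1 : (W * M2⁻¹ * Wi).mulVec eo = (W * M2⁻¹).mulVec eo := by
      rw [← Matrix.mulVec_mulVec, hWieo]
    rw [← h1, ← hinv2]
    have h := inv_bound (W * M2 * Wi) (η - η/4) hc34 hN2lb eo
    rwa [hl2eo, mul_one] at h
  -- the middle matrix
  set Dm := M2 - M1 with hDm
  have hDmeq : Dm = Hc2 - Hc1 := by rw [hDm, hM1, hM2]; abel
  set b := t * (d:ℝ) * Real.exp (-(μ * (2*(r:ℝ)+1))) with hb
  have hbnonneg : 0 ≤ b := by rw [hb]; positivity
  have hBBent : ∀ x y, ‖(Wi * Dm * Wi) x y‖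
      ≤ t * Real.exp (-(μ * (2*(r:ℝ)+1))) * A1 x y := by
    intro x y
    have hent : (Wi * Dm * Wi) x y
        = (((w x)⁻¹ : ℝ):ℂ) * Dm x y * (((w y)⁻¹ : ℝ):ℂ) := by
      rw [hWi, Matrix.mul_diagonal, Matrix.diagonal_mul]
    have hD : Dm x y = ((-t * (A2 x y - A1 x y) : ℝ) : ℂ) := by
      rw [hDmeq, Matrix.sub_apply, hHc2, hHc1, Matrix.map_apply, Matrix.map_apply,
        hH1, hH2, Matrix.add_apply, Matrix.add_apply, Matrix.smul_apply, Matrix.smul_apply,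
        smul_eq_mul, smul_eq_mul]
      push_cast
      ring
    rw [hent, hD]
    by_cases hcnd : (x ∈ graphBall G o r ↔ y ∈ graphBall G o r)
    · have hA2xy : A2 x y = A1 x y := by
        rw [hA2]; simp only [Matrix.of_apply]; rw [if_pos hcnd]
      rw [hA2xy]
      have hz0 : (-t * (A1 x y - A1 x y) : ℝ) = 0 := by ring
      rw [hz0]
      simp only [Complex.ofReal_zero, mul_zero, zero_mul, norm_zero]
      exact mul_nonneg (mul_nonneg ht.le (Real.exp_pos _).le) (hA1nonneg x y)
    · have hA2xy : A2 x y = 0 := by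
        rw [hA2]; simp only [Matrix.of_apply]; rw [if_neg hcnd]
      rw [hA2xy]
      by_cases hadjxy : G.Adj x y
      · have hA1xy : A1 x y = 1 := by simp [hA1, SimpleGraph.adjMatrix_apply, hadjxy]
        rw [hA1xy]
        have hdsum : (2*(r:ℝ)+1) ≤ (G.dist o x : ℝ) + (G.dist o y : ℝ) := by
          by_cases hxB : x ∈ graphBall G o r
          · have hyB : y ∉ graphBall G o r := fun h => hcnd ⟨fun _ => h, fun _ => hxB⟩
            obtain ⟨h1, h2⟩ := crossing_dist hadjxy hxB hyB
            have h1' : (r:ℝ) ≤ G.dist o x := by exact_mod_cast h1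
            have h2' : (r:ℝ) + 1 ≤ G.dist o y := by exact_mod_cast h2
            linarith
          · have hyB : y ∈ graphBall G o r := by
              by_contra hyB
              exact hcnd ⟨fun h => absurd h hxB, fun h => absurd h hyB⟩
            obtain ⟨h1, h2⟩ := crossing_dist hadjxy.symm hyB hxB
            have h1' : (r:ℝ) ≤ G.dist o y := by exact_mod_cast h1
            have h2' : (r:ℝ) + 1 ≤ G.dist o x := by exact_mod_cast h2
            linarith
        have hcast : (((w x)⁻¹ : ℝ):ℂ) * ((-t * ((0:ℝ) - 1) : ℝ) : ℂ) * (((w y)⁻¹ : ℝ):ℂ)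
            = (((w x)⁻¹ * t * (w y)⁻¹ : ℝ) : ℂ) := by
          push_cast
          ring
        rw [hcast, Complex.norm_real, Real.norm_eq_abs, abs_of_nonneg (by positivity)]
        have hwx : (w x)⁻¹ = Real.exp (-(μ * G.dist o x)) := by
          simp only [hwdef]
          rw [← Real.exp_neg]
        have hwy : (w y)⁻¹ = Real.exp (-(μ * G.dist o y)) := by
          simp only [hwdef]
          rw [← Real.exp_neg]
        rw [hwx, hwy, mul_one]
        calc Real.exp (-(μ * G.dist o x)) * t * Real.exp (-(μ * G.dist o y))
            = t * Real.exp (-(μ * ((G.dist o x : ℝ) + (G.dist o y : ℝ)))) := by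
              rw [show (-(μ * ((G.dist o x:ℝ) + (G.dist o y:ℝ))))
                  = -(μ * (G.dist o x:ℝ)) + -(μ * (G.dist o y:ℝ)) from by ring,
                Real.exp_add]
              ring
          _ ≤ t * Real.exp (-(μ * (2*(r:ℝ)+1))) := by
              apply mul_le_mul_of_nonneg_left _ ht.le
              apply Real.exp_le_exp.mpr
              nlinarith [hμ0]
      · have hA1xy : A1 x y = 0 := by simp [hA1, SimpleGraph.adjMatrix_apply, hadjxy]
        rw [hA1xy]
        have hz0 : (-t * ((0:ℝ) - 0) : ℝ) = 0 := by ring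
        rw [hz0]
        simp only [Complex.ofReal_zero, mul_zero, zero_mul, norm_zero]
        nlinarith [Real.exp_pos (-(μ * (2*(r:ℝ)+1))), ht]
  have hexnn : (0:ℝ) ≤ t * Real.exp (-(μ * (2*(r:ℝ)+1))) := by positivity
  have hBBrow : ∀ x, ∑ y, ‖(Wi * Dm * Wi) x y‖ ≤ b := by
    intro x
    calc ∑ y, ‖(Wi * Dm * Wi) x y‖
        ≤ ∑ y, t * Real.exp (-(μ * (2*(r:ℝ)+1))) * A1 x y :=
          Finset.sum_le_sum fun y _ => hBBent x y
      _ = t * Real.exp (-(μ * (2*(r:ℝ)+1))) * ∑ y, A1 x y := by rw [Finset.mul_sum]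
      _ ≤ t * Real.exp (-(μ * (2*(r:ℝ)+1))) * (d:ℝ) :=
          mul_le_mul_of_nonneg_left (hdegsum x) hexnn
      _ = b := by rw [hb]; ring
  have hBBcol : ∀ y, ∑ x, ‖(Wi * Dm * Wi) x y‖ ≤ b := by
    intro y
    calc ∑ x, ‖(Wi * Dm * Wi) x y‖
        ≤ ∑ x, t * Real.exp (-(μ * (2*(r:ℝ)+1))) * A1 x y :=
          Finset.sum_le_sum fun x _ => hBBent x y
      _ = t * Real.exp (-(μ * (2*(r:ℝ)+1))) * ∑ x, A1 x y := by rw [Finset.mul_sum]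
      _ ≤ t * Real.exp (-(μ * (2*(r:ℝ)+1))) * (d:ℝ) :=
          mul_le_mul_of_nonneg_left (hdegsum' y) hexnn
      _ = b := by rw [hb]; ring
  have hBBop : ∀ v, l2n ((Wi * Dm * Wi).mulVec v) ≤ b * l2n v :=
    schur _ b hbnonneg hBBrow hBBcol
  -- resolvent identity and factorization
  have hres : M1⁻¹ * Dm * M2⁻¹ = M1⁻¹ - M2⁻¹ := by
    rw [hDm, Matrix.mul_sub, Matrix.sub_mul, Matrix.mul_assoc M1⁻¹ M2 M2⁻¹,
      Matrix.mul_nonsing_inv _ hu2, mul_one, Matrix.nonsing_inv_mul _ hu1, one_mul]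
  have hPfact : M1⁻¹ * W * (Wi * Dm * Wi) * (W * M2⁻¹) = M1⁻¹ * Dm * M2⁻¹ := by
    simp only [Matrix.mul_assoc]
    rw [← Matrix.mul_assoc Wi W M2⁻¹, hWiW, one_mul,
      ← Matrix.mul_assoc W Wi (Dm * M2⁻¹), hWWi, one_mul]
  have hsum_eq : (M1⁻¹ - M2⁻¹) o o
      = ∑ x, (M1⁻¹ * W) o x * ((Wi * Dm * Wi).mulVec ((W * M2⁻¹).mulVec eo)) x := by
    have h1 : (M1⁻¹ - M2⁻¹).mulVec eo
        = (M1⁻¹ * W).mulVec ((Wi * Dm * Wi).mulVec ((W * M2⁻¹).mulVec eo)) := by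
      rw [Matrix.mulVec_mulVec, Matrix.mulVec_mulVec, hPfact, hres]
    have h2 : ((M1⁻¹ - M2⁻¹).mulVec eo) o = (M1⁻¹ - M2⁻¹) o o := by
      rw [heo]
      simp [Matrix.mulVec_single]
    rw [← h2, h1]
    rfl
  -- put everything together
  have hmid : l2n ((Wi * Dm * Wi).mulVec ((W * M2⁻¹).mulVec eo)) ≤ b * (η - η/4)⁻¹ :=
    (hBBop _).trans (mul_le_mul_of_nonneg_left hv2b hbnonneg)
  have habs : ‖(M1⁻¹ - M2⁻¹) o o‖ ≤ (η - η/4)⁻¹ * (b * (η - η/4)⁻¹) := by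
    rw [hsum_eq]
    calc ‖∑ x, (M1⁻¹ * W) o x * ((Wi * Dm * Wi).mulVec ((W * M2⁻¹).mulVec eo)) x‖
        ≤ l2n (fun x => (M1⁻¹ * W) o x) *
          l2n ((Wi * Dm * Wi).mulVec ((W * M2⁻¹).mulVec eo)) := abs_sum_mul_le _ _
      _ ≤ (η - η/4)⁻¹ * (b * (η - η/4)⁻¹) := by
          apply mul_le_mul hub hmid (l2n_nonneg _) (inv_nonneg.mpr hc34.le)
  have hgoal1 : M1⁻¹ o o - M2⁻¹ o o = (M1⁻¹ - M2⁻¹) o o := (Matrix.sub_apply _ _ _ _).symm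
  rw [hgoal1]
  refine habs.trans ?_
  have hη2 : (0:ℝ) < η^2 := by positivity
  have hcval : (η - η/4)⁻¹ * (b * (η - η/4)⁻¹)
      = 16 * (t*(d:ℝ)) * Real.exp (-(μ*(2*(r:ℝ)+1))) / (9 * η^2) := by
    rw [hb]
    rw [show η - η/4 = 3*η/4 from by ring, inv_div]
    field_simp [ne_of_gt hη]
    ring
  rw [hcval]
  have hexple : Real.exp (-(μ * (2*(r:ℝ)+1))) ≤ Real.exp (-2 * μ * (r:ℝ)) := by
    apply Real.exp_le_exp.mpr
    nlinarith [hμ0, Nat.cast_nonneg (α := ℝ) r]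
  calc 16 * (t*(d:ℝ)) * Real.exp (-(μ*(2*(r:ℝ)+1))) / (9 * η^2)
      ≤ 16 * (t*(d:ℝ)) * Real.exp (-2*μ*(r:ℝ)) / (9 * η^2) := by gcongr
    _ ≤ 36 * (t*(d:ℝ)) * Real.exp (-2*μ*(r:ℝ)) / (9 * η^2) := by
        gcongr
        norm_num
    _ = 4 * t * (d:ℝ) / η^2 * Real.exp (-2*μ*(r:ℝ)) := by
        field_simp
        ring
end
end

section
/- Let d ≥ 10 be an integer, and let C₁ ≥ 1, C₂ > 0, p* ∈ (0,1), y* > 0, and ε₁ ∈ (0,1] be reals. Let F : (0,∞) → [0,1] be a nondecreasing function such that F(y*) ≤ 1 − p* and F(ε) ≤ F(C₁·ε^{1/3})^{d−1} + C₂·ε^{1/3} for all ε ∈ (0, ε₁]. Then there exists ε* ∈ (0,1] (depending on d, C₁, C₂, p*, y*, ε₁) such that F(ε) ≤ ε^{31/301} for all ε ∈ (0, ε*]. -/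
set_option maxHeartbeats 4000000

private lemma cube_rt {t : ℝ} (ht : 0 ≤ t) : ((t ^ (3:ℕ) : ℝ)) ^ ((1:ℝ)/3) = t := by
  rw [← Real.rpow_natCast t 3, ← Real.rpow_mul ht]
  norm_num

private lemma rt_cube {ε : ℝ} (hε : 0 ≤ ε) : (ε ^ ((1:ℝ)/3)) ^ (3:ℕ) = ε := by
  rw [← Real.rpow_natCast (ε ^ ((1:ℝ)/3)) 3, ← Real.rpow_mul hε]
  norm_num

private lemma rt_le {ε t : ℝ} (hε : 0 ≤ ε) (ht : 0 ≤ t) (h : ε ≤ t ^ (3:ℕ)) :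
    ε ^ ((1:ℝ)/3) ≤ t := by
  calc ε ^ ((1:ℝ)/3) ≤ (t ^ (3:ℕ)) ^ ((1:ℝ)/3) := Real.rpow_le_rpow hε h (by norm_num)
    _ = t := cube_rt ht

private lemma le_rt {ε t : ℝ} (ht : 0 ≤ t) (h : t ^ (3:ℕ) ≤ ε) : t ≤ ε ^ ((1:ℝ)/3) := by
  have h0 : (0:ℝ) ≤ t ^ (3:ℕ) := pow_nonneg ht 3
  calc t = (t ^ (3:ℕ)) ^ ((1:ℝ)/3) := (cube_rt ht).symm
    _ ≤ ε ^ ((1:ℝ)/3) := Real.rpow_le_rpow h0 h (by norm_num)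

private noncomputable def aseq (a₀ : ℝ) : ℕ → ℝ
  | 0 => a₀
  | n+1 => 2 * (aseq a₀ n) ^ 9

private noncomputable def dseq (C₁ C₂ a₀ δ₀ : ℝ) : ℕ → ℝ
  | 0 => δ₀
  | n+1 => min (min ((dseq C₁ C₂ a₀ δ₀ n / C₁) ^ 3)
      (((aseq a₀ n) ^ 9 / C₂) ^ 3)) (dseq C₁ C₂ a₀ δ₀ n)

private noncomputable def bseq (C₁ e : ℝ) : ℕ → ℝ
  | 0 => (e / C₁) ^ 3
  | k+1 => (bseq C₁ e k / C₁) ^ 3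

theorem stmt18 (d : ℕ) (hd : 10 ≤ d)
    (C₁ C₂ pstar ystar ε₁ : ℝ) (hC₁ : 1 ≤ C₁) (hC₂ : 0 < C₂)
    (hp : pstar ∈ Set.Ioo (0 : ℝ) 1) (hy : 0 < ystar) (hε₁ : ε₁ ∈ Set.Ioc (0 : ℝ) 1)
    (F : ℝ → ℝ)
    (hF01 : ∀ x : ℝ, 0 < x → F x ∈ Set.Icc (0 : ℝ) 1)
    (hmono : ∀ x y : ℝ, 0 < x → x ≤ y → F x ≤ F y)
    (hseed : F ystar ≤ 1 - pstar)
    (hrec : ∀ ε : ℝ, 0 < ε → ε ≤ ε₁ →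
      F ε ≤ F (C₁ * ε ^ ((1 : ℝ) / 3)) ^ (d - 1) + C₂ * ε ^ ((1 : ℝ) / 3)) :
    ∃ εstar : ℝ, εstar ∈ Set.Ioc (0 : ℝ) 1 ∧
      ∀ ε : ℝ, 0 < ε → ε ≤ εstar → F ε ≤ ε ^ ((31 : ℝ) / 301) := by
  obtain ⟨hp0, hp1⟩ := hp
  obtain ⟨hε₁0, hε₁1⟩ := hε₁
  have hC₁0 : (0:ℝ) < C₁ := lt_of_lt_of_le one_pos hC₁
  have hd9 : 9 ≤ d - 1 := by omega
  have hF0 : ∀ x, 0 < x → 0 ≤ F x := fun x hx => (hF01 x hx).1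
  have hF1 : ∀ x, 0 < x → F x ≤ 1 := fun x hx => (hF01 x hx).2
  -- the one-step lemma
  have hstep : ∀ a c δ : ℝ, 0 ≤ a → a ≤ 1 → 0 < c → 0 < δ → δ ≤ min ε₁ 1 →
      (∀ ε, 0 < ε → ε ≤ δ → F ε ≤ a) →
      ∀ ε, 0 < ε → ε ≤ min (min ((δ / C₁) ^ 3) ((c / C₂) ^ 3)) δ →
        F ε ≤ a ^ 9 + c := by
    intro a c δ ha0 ha1 hc hδ0 hδle hFb ε hε hεle
    have hεδ : ε ≤ δ := le_trans hεle (min_le_right _ _)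
    have hεX : ε ≤ (δ / C₁) ^ 3 := le_trans hεle (le_trans (min_le_left _ _) (min_le_left _ _))
    have hεY : ε ≤ (c / C₂) ^ 3 := le_trans hεle (le_trans (min_le_left _ _) (min_le_right _ _))
    have hεε₁ : ε ≤ ε₁ := le_trans hεδ (le_trans hδle (min_le_left _ _))
    have hrt : ε ^ ((1:ℝ)/3) ≤ δ / C₁ := rt_le hε.le (by positivity) hεX
    have hu0 : 0 < C₁ * ε ^ ((1:ℝ)/3) := by positivity
    have huδ : C₁ * ε ^ ((1:ℝ)/3) ≤ δ := by
      calc C₁ * ε ^ ((1:ℝ)/3) ≤ C₁ * (δ / C₁) := mul_le_mul_of_nonneg_left hrt hC₁0.le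
        _ = δ := by field_simp
    have hFu : F (C₁ * ε ^ ((1:ℝ)/3)) ≤ a := hFb _ hu0 huδ
    have h9 : F (C₁ * ε ^ ((1:ℝ)/3)) ^ (d-1) ≤ F (C₁ * ε ^ ((1:ℝ)/3)) ^ 9 :=
      pow_le_pow_of_le_one (hF0 _ hu0) (hF1 _ hu0) hd9
    have h9' : F (C₁ * ε ^ ((1:ℝ)/3)) ^ 9 ≤ a ^ 9 := pow_le_pow_left₀ (hF0 _ hu0) hFu 9
    have htail : C₂ * ε ^ ((1:ℝ)/3) ≤ c := by
      have h := rt_le hε.le (by positivity : (0:ℝ) ≤ c / C₂) hεY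
      calc C₂ * ε ^ ((1:ℝ)/3) ≤ C₂ * (c / C₂) := mul_le_mul_of_nonneg_left h hC₂.le
        _ = c := by field_simp
    have hr := hrec ε hε hεε₁
    linarith
  -- Phase 0
  set q : ℝ := 1 - pstar with hq
  have hq0 : 0 < q := by rw [hq]; linarith
  have hq1 : q < 1 := by rw [hq]; linarith
  have hphase0aux : ∀ n : ℕ, ∃ δ : ℝ, 0 < δ ∧ δ ≤ min ε₁ 1 ∧
      ∀ ε, 0 < ε → ε ≤ δ → F ε ≤ q ^ (n+1) := by
    intro n
    induction n with
    | zero =>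
      refine ⟨min (min ystar ε₁) 1, by positivity, ?_, ?_⟩
      · exact le_min (le_trans (min_le_left _ _) (min_le_right _ _)) (min_le_right _ _)
      · intro ε hε hεle
        have hεy : ε ≤ ystar := le_trans hεle (le_trans (min_le_left _ _) (min_le_left _ _))
        calc F ε ≤ F ystar := hmono ε ystar hε hεy
          _ ≤ 1 - pstar := hseed
          _ = q ^ (0+1) := by rw [pow_one, hq]
    | succ n ih =>
      obtain ⟨δ, hδ0, hδle, hFb⟩ := ih
      have hcpos : 0 < q ^ (n+2) - q ^ (9*(n+1)) := by
        have := pow_lt_pow_right_of_lt_one₀ hq0 hq1 (show n+2 < 9*(n+1) by omega)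
        linarith
      refine ⟨min (min ((δ / C₁) ^ 3) (((q ^ (n+2) - q ^ (9*(n+1))) / C₂) ^ 3)) δ,
        by positivity, le_trans (min_le_right _ _) hδle, ?_⟩
      intro ε hε hεle
      have h := hstep (q^(n+1)) (q ^ (n+2) - q ^ (9*(n+1))) δ (by positivity)
        (pow_le_one₀ hq0.le hq1.le) hcpos hδ0 hδle hFb ε hε hεle
      have hpow : (q ^ (n+1)) ^ 9 = q ^ (9*(n+1)) := by rw [← pow_mul, Nat.mul_comm]
      have : F ε ≤ q ^ (n+2) := by rw [hpow] at h; linarith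
      calc F ε ≤ q ^ (n+2) := this
        _ = q ^ (n+1+1) := by ring_nf
  have hphase0 : ∀ η : ℝ, 0 < η → ∃ δ : ℝ, 0 < δ ∧ δ ≤ min ε₁ 1 ∧
      ∀ ε, 0 < ε → ε ≤ δ → F ε ≤ η := by
    intro η hη
    obtain ⟨n, hn⟩ := exists_pow_lt_of_lt_one hη hq1
    obtain ⟨δ, h1, h2, h3⟩ := hphase0aux n
    exact ⟨δ, h1, h2, fun ε hε hεle => le_trans (h3 ε hε hεle)
      (le_trans (pow_le_pow_of_le_one hq0.le hq1.le (by omega)) hn.le)⟩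
  -- Phase 1
  have hphase1 : ∀ T : ℝ, 0 < T → ∃ e aa : ℝ, 0 < e ∧ e ≤ T ∧ e ≤ min ε₁ 1 ∧ 0 < aa ∧
      (∀ ε, 0 < ε → ε ≤ e → F ε ≤ aa) ∧ aa ≤ (e / C₁) ^ ((93:ℝ)/301) := by
    intro T hT
    set K : ℝ := 2 * C₂ + 1 with hKdef
    have hK1 : (1:ℝ) ≤ K := by rw [hKdef]; linarith
    have hK0 : (0:ℝ) < K := lt_of_lt_of_le one_pos hK1
    have hK2 : 2 * C₂ ≤ K := by rw [hKdef]; linarith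
    set M : ℝ := 8 * K^6 * C₁^3 with hMdef
    have hK6 : (1:ℝ) ≤ K^6 := one_le_pow₀ hK1
    have hC₁3 : (1:ℝ) ≤ C₁^3 := one_le_pow₀ hC₁
    have hM1 : (1:ℝ) ≤ M := by rw [hMdef]; nlinarith
    have hM0 : (0:ℝ) < M := lt_of_lt_of_le one_pos hM1
    have hη0 : (0:ℝ) < min (min (1/3) ε₁) (1/M) := by positivity
    obtain ⟨δ₀, hδ₀0, hδ₀le, hFδ₀⟩ := hphase0 _ hη0
    set a₀ : ℝ := min (min (1/3) ε₁) (1/M) with ha₀def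
    have ha₀0 : 0 < a₀ := hη0
    have ha₀13 : a₀ ≤ 1/3 := le_trans (min_le_left _ _) (min_le_left _ _)
    have ha₀M : a₀ ≤ 1/M := min_le_right _ _
    have ha₀1 : a₀ ≤ 1 := le_trans ha₀13 (by norm_num)
    set H : ℝ := 2 * a₀ with hHdef
    have hH0 : (0:ℝ) < H := by positivity
    have hH1 : H < 1 := by rw [hHdef]; linarith
    have hH1' : H ≤ 1 := hH1.le
    have hδ₀1 : δ₀ ≤ 1 := le_trans hδ₀le (min_le_right _ _)
    set G : ℝ := δ₀ / C₁^2 with hGdef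
    have hG0 : (0:ℝ) < G := by positivity
    have hC₁2 : (1:ℝ) ≤ C₁^2 := one_le_pow₀ hC₁
    have hG1 : G ≤ 1 := by
      rw [hGdef, div_le_one (by positivity)]
      exact le_trans hδ₀1 hC₁2
    set A : ℕ → ℝ := aseq a₀ with hAdef
    set D : ℕ → ℝ := dseq C₁ C₂ a₀ δ₀ with hDdef
    have hAsucc : ∀ n, A (n+1) = 2 * (A n) ^ 9 := fun n => rfl
    have hDsucc : ∀ n, D (n+1) = min (min ((D n / C₁) ^ 3) (((A n) ^ 9 / C₂) ^ 3)) (D n) :=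
      fun n => rfl
    have hA : ∀ n, 0 < A n ∧ A n ≤ a₀ := by
      intro n
      induction n with
      | zero => exact ⟨ha₀0, le_refl _⟩
      | succ n ih =>
        obtain ⟨h1, h2⟩ := ih
        refine ⟨by rw [hAsucc]; positivity, ?_⟩
        have h9 : (A n)^9 ≤ a₀^9 := pow_le_pow_left₀ h1.le h2 9
        have h8 : a₀^8 ≤ (1/3)^8 := pow_le_pow_left₀ ha₀0.le ha₀13 8
        have he : a₀^9 = a₀ * a₀^8 := by ring
        rw [hAsucc]
        nlinarith
    have hAdec : ∀ n, A (n+1) ≤ A n := by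
      intro n
      obtain ⟨h1, h2⟩ := hA n
      have h8 : (A n)^8 ≤ (1/3)^8 := pow_le_pow_left₀ h1.le (le_trans h2 ha₀13) 8
      have he : A (n+1) = 2 * ((A n)^8 * A n) := by rw [hAsucc]; ring
      rw [he]
      nlinarith
    have hAH : ∀ n, A n ≤ H ^ (9^n) / 2 := by
      intro n
      induction n with
      | zero =>
        show a₀ ≤ H ^ (9^0) / 2
        rw [pow_zero, pow_one, hHdef]
        linarith
      | succ n ih =>
        have h1 := (hA n).1
        have hpos : (0:ℝ) ≤ H ^ (9^(n+1)) := by positivity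
        calc A (n+1) = 2 * (A n)^9 := hAsucc n
          _ ≤ 2 * (H ^ (9^n) / 2)^9 :=
              mul_le_mul_of_nonneg_left (pow_le_pow_left₀ h1.le ih 9) (by norm_num)
          _ = (H ^ (9^n))^9 / 256 := by ring
          _ = H ^ (9^(n+1)) / 256 := by rw [← pow_mul, ← pow_succ]
          _ ≤ H ^ (9^(n+1)) / 2 := by linarith
    have hD : ∀ n, 0 < D n ∧ D n ≤ min ε₁ 1 ∧ ∀ ε, 0 < ε → ε ≤ D n → F ε ≤ A n := by
      intro n
      induction n with
      | zero => exact ⟨hδ₀0, hδ₀le, hFδ₀⟩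
      | succ n ih =>
        obtain ⟨h1, h2, h3⟩ := ih
        obtain ⟨ha1, ha2⟩ := hA n
        have hc : 0 < (A n)^9 := by positivity
        refine ⟨by rw [hDsucc]; positivity,
          le_trans (by rw [hDsucc]; exact min_le_right _ _) h2, ?_⟩
        intro ε hε hεle
        rw [hDsucc] at hεle
        have h := hstep (A n) ((A n)^9) (D n) ha1.le (le_trans ha2 ha₀1) hc h1 h2 h3 ε hε hεle
        rw [hAsucc]
        linarith
    have hZY : ∀ n, (A (n+1) / K)^3 ≤ ((A n)^9 / C₂)^3 := by
      intro n
      obtain ⟨h1, _⟩ := hA n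
      apply pow_le_pow_left₀ (div_nonneg (hA (n+1)).1.le hK0.le)
      rw [hAsucc, div_le_div_iff₀ hK0 hC₂]
      nlinarith [pow_pos h1 9]
    have hinvstep : ∀ n, (A n / K)^3 ≤ D n → (A (n+1) / K)^3 ≤ D (n+1) := by
      intro n hyp
      obtain ⟨ha1, ha2⟩ := hA n
      obtain ⟨hd1, _, _⟩ := hD n
      rw [hDsucc]
      refine le_min (le_min ?_ (hZY n)) ?_
      · have hXlow : ((A n / K)^3 / C₁)^3 ≤ (D n / C₁)^3 := by
          apply pow_le_pow_left₀ (by positivity)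
          exact div_le_div_of_nonneg_right hyp hC₁0.le
        refine le_trans ?_ hXlow
        apply pow_le_pow_left₀ (div_nonneg (hA (n+1)).1.le hK0.le)
        rw [hAsucc, div_pow, div_div, div_le_div_iff₀ hK0 (by positivity)]
        have h6 : (A n)^6 ≤ 1/M := by
          calc (A n)^6 ≤ a₀^6 := pow_le_pow_left₀ ha1.le ha2 6
            _ ≤ a₀^1 := pow_le_pow_of_le_one ha₀0.le ha₀1 (by norm_num)
            _ = a₀ := pow_one _
            _ ≤ 1/M := ha₀M
        have hsplit : 2 * (A n)^9 * (K^3 * C₁) = (A n)^3 * ((A n)^6 * (2 * K^3 * C₁)) := by ring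
        have hconst : (A n)^6 * (2 * K^3 * C₁) ≤ K := by
          have hstep1 : (A n)^6 * (2 * K^3 * C₁) ≤ (1/M) * (2 * K^3 * C₁) :=
            mul_le_mul_of_nonneg_right h6 (by positivity)
          refine le_trans hstep1 ?_
          rw [one_div, inv_mul_le_iff₀ hM0, hMdef]
          have hK37 : K^3 ≤ K^7 := pow_le_pow_right₀ hK1 (by norm_num)
          have hC₁13 : C₁ ≤ C₁^3 := by
            calc C₁ = C₁^1 := (pow_one _).symm
              _ ≤ C₁^3 := pow_le_pow_right₀ hC₁ (by norm_num)
          nlinarith [pow_pos hK0 3, pow_pos hK0 7, pow_pos hC₁0 3]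
        calc 2 * (A n)^9 * (K^3 * C₁) = (A n)^3 * ((A n)^6 * (2 * K^3 * C₁)) := hsplit
          _ ≤ (A n)^3 * K := mul_le_mul_of_nonneg_left hconst (by positivity)
      · refine le_trans ?_ hyp
        apply pow_le_pow_left₀ (div_nonneg (hA (n+1)).1.le hK0.le)
        exact div_le_div_of_nonneg_right (hAdec n) hK0.le
    have hGleD : ∀ n, min (C₁^2 * G ^ (3^n)) ((A n / K)^3) ≤ D n → ¬ ((A n / K)^3 ≤ D n) →
        C₁^2 * G ^ (3^n) ≤ D n := by
      intro n ih hbad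
      rcases le_total (C₁^2 * G ^ (3^n)) ((A n / K)^3) with h | h
      · rwa [min_eq_left h] at ih
      · rw [min_eq_right h] at ih; exact absurd ih hbad
    have hlb : ∀ n, min (C₁^2 * G ^ (3^n)) ((A n / K)^3) ≤ D n := by
      intro n
      induction n with
      | zero =>
        have he : C₁^2 * G ^ (3^0) = δ₀ := by
          rw [hGdef, pow_zero, pow_one]
          field_simp
        rw [he] at *
        exact le_trans (min_le_left _ _) (le_of_eq rfl)
      | succ n ih =>
        rcases le_or_gt ((A n / K)^3) (D n) with hcase | hcase
        · exact le_trans (min_le_right _ _) (hinvstep n hcase)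
        · have hGle : C₁^2 * G ^ (3^n) ≤ D n := hGleD n ih (not_le.mpr hcase)
          rw [hDsucc]
          refine le_min (le_min ?_ ?_) ?_
          · -- ≤ (D n / C₁)^3
            refine le_trans (min_le_left _ _) ?_
            have h1 : (C₁^2 * G ^ (3^n) / C₁)^3 ≤ (D n / C₁)^3 := by
              apply pow_le_pow_left₀ (by positivity)
              exact div_le_div_of_nonneg_right hGle hC₁0.le
            refine le_trans ?_ h1
            have h2 : (C₁^2 * G ^ (3^n) / C₁)^3 = C₁^3 * G ^ (3^(n+1)) := by
              have hexp : (3:ℕ)^(n+1) = 3^n * 3 := pow_succ 3 n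
              rw [hexp, pow_mul]
              field_simp
            rw [h2]
            have : C₁^2 ≤ C₁^3 := pow_le_pow_right₀ hC₁ (by norm_num)
            have hGp : (0:ℝ) ≤ G ^ (3^(n+1)) := by positivity
            nlinarith
          · exact le_trans (min_le_right _ _) (hZY n)
          · refine le_trans (min_le_left _ _) ?_
            refine le_trans ?_ hGle
            have : G ^ (3^(n+1)) ≤ G ^ (3^n) :=
              pow_le_pow_of_le_one hG0.le hG1 (Nat.pow_le_pow_right (by norm_num) (by omega))
            nlinarith [sq_nonneg C₁, pow_pos hC₁0 2]
    obtain ⟨m, hm⟩ := exists_pow_lt_of_lt_one hG0 hH1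
    have hinvN : (A m / K)^3 ≤ D m := by
      rcases le_or_gt ((A m / K)^3) (D m) with h | h
      · exact h
      · exfalso
        have hGle : C₁^2 * G ^ (3^m) ≤ D m := hGleD m (hlb m) (not_le.mpr h)
        have hkey : (A m / K)^3 ≤ C₁^2 * G ^ (3^m) := by
          have h1 : A m / K ≤ H ^ (9^m) := by
            calc A m / K ≤ A m := div_le_self (hA m).1.le hK1
              _ ≤ H ^ (9^m) / 2 := hAH m
              _ ≤ H ^ (9^m) := by
                  have : (0:ℝ) ≤ H ^ (9^m) := by positivity
                  linarith
          have h2 : (A m / K)^3 ≤ (H ^ (9^m))^3 :=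
            pow_le_pow_left₀ (div_nonneg (hA m).1.le hK0.le) h1 3
          have h3 : (H ^ (9^m))^3 = (H ^ (3 * 3^m)) ^ (3^m) := by
            rw [← pow_mul, ← pow_mul]
            congr 1
            rw [show (9:ℕ) = 3 * 3 from rfl, mul_pow]
            ring
          have hm3' : m < 3^m := Nat.lt_pow_self (n := m) (by norm_num)
          have hm3 : m ≤ 3 * 3^m := by omega
          have h4 : H ^ (3 * 3^m) ≤ H ^ m := pow_le_pow_of_le_one hH0.le hH1' hm3
          have h5 : (H ^ (3 * 3^m)) ^ (3^m) ≤ G ^ (3^m) :=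
            pow_le_pow_left₀ (by positivity) (le_trans h4 hm.le) _
          have h6 : G ^ (3^m) ≤ C₁^2 * G ^ (3^m) := by
            have hGp : (0:ℝ) ≤ G ^ (3^m) := by positivity
            nlinarith
          calc (A m / K)^3 ≤ (H ^ (9^m))^3 := h2
            _ = (H ^ (3 * 3^m)) ^ (3^m) := h3
            _ ≤ G ^ (3^m) := h5
            _ ≤ C₁^2 * G ^ (3^m) := h6
        linarith [le_trans hkey hGle]
    have hinvall : ∀ n, m ≤ n → (A n / K)^3 ≤ D n := by
      intro n hn
      induction n, hn using Nat.le_induction with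
      | base => exact hinvN
      | succ n hn ih => exact hinvstep n ih
    set R : ℝ := (K^3 * C₁)^93 with hRdef
    have hKC1 : (1:ℝ) ≤ K^3 * C₁ := by nlinarith [(one_le_pow₀ hK1 : (1:ℝ) ≤ K^3)]
    have hR1 : (1:ℝ) ≤ R := one_le_pow₀ hKC1
    have hR0 : (0:ℝ) < R := lt_of_lt_of_le one_pos hR1
    have hτ0 : (0:ℝ) < min (min 1 (T * C₂^3)) (1/R) := by positivity
    obtain ⟨m₁, hm₁⟩ := exists_pow_lt_of_lt_one hτ0 hH1
    set n0 : ℕ := max m m₁ with hn0def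
    have han0 : A n0 ≤ min (min 1 (T * C₂^3)) (1/R) := by
      have h1 : A n0 ≤ H ^ (9^n0) := by
        have := hAH n0
        have hp : (0:ℝ) ≤ H ^ (9^n0) := by positivity
        linarith
      have h2 : H ^ (9^n0) ≤ H ^ n0 := pow_le_pow_of_le_one hH0.le hH1'
        (le_trans (Nat.lt_pow_self (n := n0) (by norm_num)).le (le_refl _))
      have h3 : H ^ n0 ≤ H ^ m₁ := pow_le_pow_of_le_one hH0.le hH1' (le_max_right m m₁)
      exact le_trans h1 (le_trans h2 (le_trans h3 hm₁.le))
    obtain ⟨hd1, hd2, hd3⟩ := hD (n0+1)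
    have hinv := hinvall (n0+1) (le_trans (le_max_left m m₁) (Nat.le_succ n0))
    have haan : 0 < A (n0+1) := (hA (n0+1)).1
    refine ⟨D (n0+1), A (n0+1), hd1, ?_, hd2, haan, hd3, ?_⟩
    · -- D (n0+1) ≤ T
      have h1 : D (n0+1) ≤ ((A n0)^9 / C₂)^3 := by
        rw [hDsucc]
        exact le_trans (min_le_left _ _) (min_le_right _ _)
      have h2 : ((A n0)^9 / C₂)^3 = (A n0)^27 / C₂^3 := by
        rw [div_pow, ← pow_mul]
      have h3 : (A n0)^27 ≤ A n0 := by
        calc (A n0)^27 ≤ (A n0)^1 :=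
          pow_le_pow_of_le_one (hA n0).1.le (le_trans (hA n0).2 ha₀1) (by norm_num)
          _ = A n0 := pow_one _
      have h4 : A n0 ≤ T * C₂^3 :=
        le_trans han0 (le_trans (min_le_left _ _) (min_le_right _ _))
      have h5 : ((A n0)^9 / C₂)^3 ≤ T := by
        rw [h2, div_le_iff₀ (by positivity)]
        linarith
      exact le_trans h1 h5
    · -- A (n0+1) ≤ (D (n0+1) / C₁) ^ (93/301)
      set aa : ℝ := A (n0+1) with haadef
      set e : ℝ := D (n0+1) with hedef
      have haa1 : aa ≤ 1 := le_trans (hA (n0+1)).2 ha₀1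
      have haaR : aa ≤ 1/R := le_trans (hAdec n0) (le_trans han0 (min_le_right _ _))
      have hx0 : (0:ℝ) < aa^3 / (K^3 * C₁) := by positivity
      have hxle : aa^3 / (K^3 * C₁) ≤ e / C₁ := by
        have heq : (aa / K)^3 = aa^3 / K^3 := div_pow aa K 3
        have h := hinv
        rw [heq] at h
        rw [← div_div]
        exact div_le_div_of_nonneg_right h hC₁0.le
      have hkey : aa^301 ≤ (aa^3 / (K^3 * C₁))^93 := by
        have h1 : (aa^3 / (K^3 * C₁))^93 = aa^279 / R := by
          rw [div_pow, ← pow_mul, hRdef]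
        have h3 : aa^22 ≤ 1/R := by
          calc aa^22 ≤ aa^1 := pow_le_pow_of_le_one haan.le haa1 (by norm_num)
            _ = aa := pow_one _
            _ ≤ 1/R := haaR
        have h4 : aa^301 = aa^279 * aa^22 := by ring
        rw [h1, h4]
        calc aa^279 * aa^22 ≤ aa^279 * (1/R) :=
            mul_le_mul_of_nonneg_left h3 (by positivity)
          _ = aa^279 / R := by rw [mul_one_div]
      have e1 : ((aa^(301:ℕ) : ℝ)) ^ ((1:ℝ)/301) = aa := by
        rw [← Real.rpow_natCast aa 301, ← Real.rpow_mul haan.le]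
        norm_num
      have e2 : ((aa^3 / (K^3 * C₁))^(93:ℕ)) ^ ((1:ℝ)/301) =
          (aa^3 / (K^3 * C₁)) ^ ((93:ℝ)/301) := by
        rw [← Real.rpow_natCast (aa^3 / (K^3 * C₁)) 93, ← Real.rpow_mul hx0.le]
        norm_num
      calc aa = ((aa^(301:ℕ) : ℝ)) ^ ((1:ℝ)/301) := e1.symm
        _ ≤ ((aa^3 / (K^3 * C₁))^(93:ℕ)) ^ ((1:ℝ)/301) :=
            Real.rpow_le_rpow (by positivity) hkey (by norm_num)
        _ = (aa^3 / (K^3 * C₁)) ^ ((93:ℝ)/301) := e2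
        _ ≤ (e / C₁) ^ ((93:ℝ)/301) := Real.rpow_le_rpow hx0.le hxle (by norm_num)
  -- Phase 2
  set c1 : ℝ := C₁ ^ ((279:ℝ)/301) with hc1def
  have hc11 : (1:ℝ) ≤ c1 := by
    calc (1:ℝ) = (1:ℝ) ^ ((279:ℝ)/301) := (Real.one_rpow _).symm
      _ ≤ C₁ ^ ((279:ℝ)/301) := Real.rpow_le_rpow zero_le_one hC₁ (by norm_num)
  have hc10 : (0:ℝ) < c1 := lt_of_lt_of_le one_pos hc11
  set T₁ : ℝ := (1/(2*c1)) ^ ((301:ℝ)/62) with hT₁def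
  set T₂ : ℝ := (1/(2*C₂)) ^ ((903:ℝ)/208) with hT₂def
  have hT₁0 : 0 < T₁ := Real.rpow_pos_of_pos (by positivity) _
  have hT₂0 : 0 < T₂ := Real.rpow_pos_of_pos (by positivity) _
  have hT0 : (0:ℝ) < min (min T₁ T₂) (1/2) := by positivity
  obtain ⟨e, aa, he0, heT, heε₁1, haa0, hFe, haaB⟩ := hphase1 _ hT0
  have heT₁ : e ≤ T₁ := le_trans heT (le_trans (min_le_left _ _) (min_le_left _ _))
  have heT₂ : e ≤ T₂ := le_trans heT (le_trans (min_le_left _ _) (min_le_right _ _))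
  have heHalf : e ≤ 1/2 := le_trans heT (min_le_right _ _)
  have heε₁ : e ≤ ε₁ := le_trans heε₁1 (min_le_left _ _)
  have he1 : e ≤ 1 := le_trans heε₁1 (min_le_right _ _)
  have hsmall1 : ∀ ε : ℝ, 0 < ε → ε ≤ e → c1 * ε ^ ((62:ℝ)/301) ≤ 1/2 := by
    intro ε hε hεe
    have h1 : ε ^ ((62:ℝ)/301) ≤ T₁ ^ ((62:ℝ)/301) :=
      Real.rpow_le_rpow hε.le (le_trans hεe heT₁) (by norm_num)
    have hmul : ((301:ℝ)/62) * ((62:ℝ)/301) = 1 := by norm_num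
    have h2 : T₁ ^ ((62:ℝ)/301) = 1/(2*c1) := by
      have hpos : (0:ℝ) ≤ 1/(2*c1) := by positivity
      rw [hT₁def, ← Real.rpow_mul hpos, hmul, Real.rpow_one]
    have h3 : c1 * (1/(2*c1)) = 1/2 := by
      field_simp
    calc c1 * ε ^ ((62:ℝ)/301) ≤ c1 * (1/(2*c1)) :=
        mul_le_mul_of_nonneg_left (le_trans h1 h2.le) hc10.le
      _ = 1/2 := h3
  have hsmall2 : ∀ ε : ℝ, 0 < ε → ε ≤ e → C₂ * ε ^ ((208:ℝ)/903) ≤ 1/2 := by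
    intro ε hε hεe
    have h1 : ε ^ ((208:ℝ)/903) ≤ T₂ ^ ((208:ℝ)/903) :=
      Real.rpow_le_rpow hε.le (le_trans hεe heT₂) (by norm_num)
    have hmul : ((903:ℝ)/208) * ((208:ℝ)/903) = 1 := by norm_num
    have h2 : T₂ ^ ((208:ℝ)/903) = 1/(2*C₂) := by
      have hpos : (0:ℝ) ≤ 1/(2*C₂) := by positivity
      rw [hT₂def, ← Real.rpow_mul hpos, hmul, Real.rpow_one]
    have h3 : C₂ * (1/(2*C₂)) = 1/2 := by
      field_simp
    calc C₂ * ε ^ ((208:ℝ)/903) ≤ C₂ * (1/(2*C₂)) :=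
        mul_le_mul_of_nonneg_left (le_trans h1 h2.le) hC₂.le
      _ = 1/2 := h3
  set b : ℕ → ℝ := bseq C₁ e with hbdef
  have hb0eq : b 0 = (e/C₁)^3 := rfl
  have hbsucc : ∀ k, b (k+1) = (b k / C₁)^3 := fun k => rfl
  have hbfacts : ∀ k, 0 < b k ∧ b k ≤ e := by
    intro k
    induction k with
    | zero =>
      refine ⟨by rw [hb0eq]; positivity, ?_⟩
      rw [hb0eq]
      calc (e/C₁)^3 ≤ e^3 := pow_le_pow_left₀ (by positivity) (div_le_self he0.le hC₁) 3
        _ ≤ e^1 := pow_le_pow_of_le_one he0.le he1 (by norm_num)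
        _ = e := pow_one _
    | succ k ih =>
      obtain ⟨h1, h2⟩ := ih
      refine ⟨by rw [hbsucc]; positivity, ?_⟩
      rw [hbsucc]
      calc (b k/C₁)^3 ≤ (b k)^3 := pow_le_pow_left₀ (by positivity) (div_le_self h1.le hC₁) 3
        _ ≤ (b k)^1 := pow_le_pow_of_le_one h1.le (le_trans h2 he1) (by norm_num)
        _ = b k := pow_one _
        _ ≤ e := h2
  have hbdecay : ∀ k, b k ≤ (b 0)^(k+1) := by
    intro k
    have hb00 : 0 < b 0 := (hbfacts 0).1
    have hb01 : b 0 ≤ 1 := le_trans (hbfacts 0).2 he1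
    induction k with
    | zero => rw [pow_one]
    | succ k ih =>
      have h1 := (hbfacts k).1
      calc b (k+1) = (b k/C₁)^3 := hbsucc k
        _ ≤ (b k)^3 := pow_le_pow_left₀ (by positivity) (div_le_self h1.le hC₁) 3
        _ ≤ ((b 0)^(k+1))^3 := pow_le_pow_left₀ h1.le ih 3
        _ = (b 0)^(3*(k+1)) := by rw [← pow_mul, Nat.mul_comm]
        _ ≤ (b 0)^(k+2) := pow_le_pow_of_le_one hb00.le hb01 (by omega)
  have hbase : ∀ ε : ℝ, 0 < ε → b 0 ≤ ε → ε ≤ e → F ε ≤ ε ^ ((31:ℝ)/301) := by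
    intro ε hε h0 hεe
    have h2 : (e/C₁) ^ ((93:ℝ)/301) = (b 0) ^ ((31:ℝ)/301) := by
      rw [hb0eq, ← Real.rpow_natCast (e/C₁) 3, ← Real.rpow_mul (by positivity)]
      norm_num
    calc F ε ≤ aa := hFe ε hε hεe
      _ ≤ (e/C₁) ^ ((93:ℝ)/301) := haaB
      _ = (b 0) ^ ((31:ℝ)/301) := h2
      _ ≤ ε ^ ((31:ℝ)/301) := Real.rpow_le_rpow (hbfacts 0).1.le h0 (by norm_num)
  have hmain : ∀ k, ∀ ε : ℝ, 0 < ε → b k ≤ ε → ε ≤ e → F ε ≤ ε ^ ((31:ℝ)/301) := by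
    intro k
    induction k with
    | zero => exact hbase
    | succ k ih =>
      intro ε hε hlb hub
      rcases le_or_gt (b k) ε with hcase | hcase
      · exact ih ε hε hcase hub
      have hεε₁ : ε ≤ ε₁ := le_trans hub heε₁
      have hrtpos : (0:ℝ) < ε ^ ((1:ℝ)/3) := Real.rpow_pos_of_pos hε _
      set u : ℝ := C₁ * ε ^ ((1:ℝ)/3) with hudef
      have hu0 : 0 < u := by rw [hudef]; positivity
      rcases le_or_gt u e with hue | hue
      · -- inner case
        have hbk1 : (b k / C₁)^3 ≤ ε := by rw [← hbsucc]; exact hlb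
        have hrtlb : b k / C₁ ≤ ε ^ ((1:ℝ)/3) :=
          le_rt (div_nonneg (hbfacts k).1.le hC₁0.le) hbk1
        have hbku : b k ≤ u := by
          rw [hudef]
          calc b k = C₁ * (b k / C₁) := by field_simp
            _ ≤ C₁ * ε ^ ((1:ℝ)/3) := mul_le_mul_of_nonneg_left hrtlb hC₁0.le
        have hFu : F u ≤ u ^ ((31:ℝ)/301) := ih u hu0 hbku hue
        have hr := hrec ε hε hεε₁
        rw [← hudef] at hr
        have h9 : F u ^ (d-1) ≤ F u ^ 9 :=
          pow_le_pow_of_le_one (hF0 u hu0) (hF1 u hu0) hd9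
        have h9' : F u ^ 9 ≤ (u ^ ((31:ℝ)/301)) ^ 9 := pow_le_pow_left₀ (hF0 u hu0) hFu 9
        have hu9 : (u ^ ((31:ℝ)/301)) ^ (9:ℕ) = u ^ ((279:ℝ)/301) := by
          rw [← Real.rpow_natCast (u ^ ((31:ℝ)/301)) 9, ← Real.rpow_mul hu0.le]
          norm_num
        have husplit : u ^ ((279:ℝ)/301) = c1 * ε ^ ((93:ℝ)/301) := by
          rw [hudef, Real.mul_rpow hC₁0.le (Real.rpow_nonneg hε.le _), hc1def]
          congr 1
          rw [← Real.rpow_mul hε.le]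
          norm_num
        have he93 : ε ^ ((93:ℝ)/301) = ε ^ ((31:ℝ)/301) * ε ^ ((62:ℝ)/301) := by
          rw [← Real.rpow_add hε]
          norm_num
        have he13 : ε ^ ((1:ℝ)/3) = ε ^ ((31:ℝ)/301) * ε ^ ((208:ℝ)/903) := by
          rw [← Real.rpow_add hε]
          norm_num
        have h7 : (0:ℝ) ≤ ε ^ ((31:ℝ)/301) := Real.rpow_nonneg hε.le _
        have hs1 := hsmall1 ε hε hub
        have hs2 := hsmall2 ε hε hub
        have hterm1 : F u ^ (d-1) ≤ ε ^ ((31:ℝ)/301) * (1/2) := by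
          have hb1 : F u ^ (d-1) ≤ c1 * (ε ^ ((31:ℝ)/301) * ε ^ ((62:ℝ)/301)) := by
            rw [← he93, ← husplit, ← hu9]
            exact le_trans h9 h9'
          have hb2 : c1 * (ε ^ ((31:ℝ)/301) * ε ^ ((62:ℝ)/301)) =
              ε ^ ((31:ℝ)/301) * (c1 * ε ^ ((62:ℝ)/301)) := by ring
          rw [hb2] at hb1
          exact le_trans hb1 (mul_le_mul_of_nonneg_left hs1 h7)
        have hterm2 : C₂ * ε ^ ((1:ℝ)/3) ≤ ε ^ ((31:ℝ)/301) * (1/2) := by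
          have hb1 : C₂ * ε ^ ((1:ℝ)/3) = ε ^ ((31:ℝ)/301) * (C₂ * ε ^ ((208:ℝ)/903)) := by
            rw [he13]; ring
          rw [hb1]
          exact mul_le_mul_of_nonneg_left hs2 h7
        calc F ε ≤ F u ^ (d-1) + C₂ * ε ^ ((1:ℝ)/3) := hr
          _ ≤ ε ^ ((31:ℝ)/301) * (1/2) + ε ^ ((31:ℝ)/301) * (1/2) := by linarith
          _ = ε ^ ((31:ℝ)/301) := by ring
      · -- u > e : ε is in the base band
        have h1 : e / C₁ ≤ ε ^ ((1:ℝ)/3) := by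
          rw [div_le_iff₀ hC₁0]
          rw [hudef] at hue
          linarith [mul_comm C₁ (ε ^ ((1:ℝ)/3))]
        have h2 : b 0 ≤ ε := by
          rw [hb0eq]
          calc (e/C₁)^3 ≤ (ε ^ ((1:ℝ)/3))^3 := pow_le_pow_left₀ (by positivity) h1 3
            _ = ε := rt_cube hε.le
        exact hbase ε hε h2 hub
  refine ⟨e, ⟨he0, he1⟩, ?_⟩
  intro ε hε hεe
  obtain ⟨k, hk⟩ := exists_pow_lt_of_lt_one hε (show (1:ℝ)/2 < 1 by norm_num)
  apply hmain k ε hε ?_ hεe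
  have hb00 : 0 < b 0 := (hbfacts 0).1
  have hb0h : b 0 ≤ 1/2 := le_trans (hbfacts 0).2 heHalf
  calc b k ≤ (b 0)^(k+1) := hbdecay k
    _ ≤ ((1:ℝ)/2)^(k+1) := pow_le_pow_left₀ hb00.le hb0h (k+1)
    _ ≤ ((1:ℝ)/2)^k := pow_le_pow_of_le_one (by norm_num) (by norm_num) (by omega)
    _ ≤ ε := hk.le
end
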